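/- Let X and Y be independent, identically distributed random variables taking values in the cyclic group ℤ/3ℤ. Then H(X+Y) ≤ H(X−Y). -/

import Mathlib

open MeasureTheory ProbabilityTheory Filter

/-- Shannon entropy (in nats) of a discrete random variable `X` on the
probability space `(Ω, P)`: `H(X) = -∑ₛ P(X = s) log P(X = s)`. -/
noncomputable def shEnt {Ω S : Type*} [MeasurableSpace Ω] (P : Measure Ω) (X : Ω → S) : ℝ :=
  ∑' s : S, Real.negMulLog (P (X ⁻¹' {s})).toReal

/-- Asymptotic: `negMulLog (σ - k) - negMulLog σ - k log σ → k` at `+∞`. -/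
lemma tendsto_negMulLog_aux (k : ℝ) :
    Tendsto (fun σ : ℝ => Real.negMulLog (σ - k) - Real.negMulLog σ - k * Real.log σ)
      atTop (nhds k) := by
  have h1 : Tendsto (fun σ : ℝ => σ * Real.log (1 + (-k) / σ)) atTop (nhds (-k)) :=
    Real.tendsto_mul_log_one_add_div_atTop (-k)
  have h2 : Tendsto (fun σ : ℝ => Real.log (1 + (-k) / σ)) atTop (nhds 0) := by
    have hb : Tendsto (fun σ : ℝ => 1 + (-k) / σ) atTop (nhds 1) := by
      have := (tendsto_const_nhds (x := (-k : ℝ)) (f := atTop)).div_atTop tendsto_id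
      simpa using tendsto_const_nhds.add this
    have hl : Tendsto Real.log (nhds (1:ℝ)) (nhds 0) := by
      simpa using (Real.continuousAt_log (by norm_num : (1:ℝ) ≠ 0)).tendsto
    exact hl.comp hb
  have key : Tendsto (fun σ : ℝ => -(σ - k) * Real.log (1 + (-k) / σ)) atTop (nhds k) := by
    have heq : (fun σ : ℝ => -(σ - k) * Real.log (1 + (-k) / σ))
        = fun σ : ℝ => -(σ * Real.log (1 + (-k) / σ)) + k * Real.log (1 + (-k) / σ) := by
      funext σ; ring
    rw [heq]
    have := h1.neg.add (h2.const_mul k)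
    simpa using this
  refine key.congr' ?_
  filter_upwards [eventually_gt_atTop (max k 0)] with σ hσ
  have hσ0 : 0 < σ := lt_of_le_of_lt (le_max_right k 0) hσ
  have hσk : 0 < σ - k := sub_pos.mpr (lt_of_le_of_lt (le_max_left k 0) hσ)
  have hrw : 1 + (-k) / σ = (σ - k) / σ := by field_simp; ring
  rw [hrw, Real.log_div (ne_of_gt hσk) (ne_of_gt hσ0)]
  simp only [Real.negMulLog]
  ring

/-- Key analytic lemma: if `α+β+γ = 2δ` and `σ(σ-δ)²` dominates `(σ-α)(σ-β)(σ-γ)`,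
then the entropy-type quantity compares. -/
lemma psi_nonneg (α β γ δ s : ℝ) (hα : 0 ≤ α) (hαs : α ≤ s) (hβs : β ≤ s) (hγs : γ ≤ s)
    (hδs : δ ≤ s) (hsum : α + β + γ = 2 * δ)
    (hprod : ∀ σ : ℝ, (σ - α) * (σ - β) * (σ - γ) ≤ σ * (σ - δ) ^ 2) :
    Real.negMulLog (s - α) + Real.negMulLog (s - β) + Real.negMulLog (s - γ)
      ≤ Real.negMulLog s + 2 * Real.negMulLog (s - δ) := by
  have hs0 : 0 ≤ s := le_trans hα hαs
  set Ψ : ℝ → ℝ := fun σ => Real.negMulLog σ + 2 * Real.negMulLog (σ - δ)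
      - Real.negMulLog (σ - α) - Real.negMulLog (σ - β) - Real.negMulLog (σ - γ) with hΨ
  suffices h : 0 ≤ Ψ s by
    simp only [hΨ] at h; linarith
  -- continuity
  have cc : ∀ k : ℝ, Continuous fun σ : ℝ => Real.negMulLog (σ - k) := fun k =>
    Real.continuous_negMulLog.comp (continuous_id.sub continuous_const)
  have hcont : Continuous Ψ := by
    exact ((((Real.continuous_negMulLog.add (continuous_const.mul (cc δ))).sub (cc α)).sub (cc β)).sub
      (cc γ))
  -- derivative
  have hds : ∀ σ : ℝ, s < σ → HasDerivAt Ψ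
      (-(Real.log σ) - 2 * Real.log (σ - δ) + Real.log (σ - α) + Real.log (σ - β)
        + Real.log (σ - γ)) σ := by
    intro σ hσ
    have h0 : (0:ℝ) < σ := lt_of_le_of_lt hs0 hσ
    have dk : ∀ k : ℝ, k ≤ s → HasDerivAt (fun σ : ℝ => Real.negMulLog (σ - k))
        (-Real.log (σ - k) - 1) σ := by
      intro k hk
      have hne : σ - k ≠ 0 := ne_of_gt (by linarith)
      have := (Real.hasDerivAt_negMulLog hne).comp σ ((hasDerivAt_id σ).sub_const k)
      rw [mul_one] at this
      exact this
    have h1 : HasDerivAt (fun σ : ℝ => Real.negMulLog σ) (-Real.log σ - 1) σ :=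
      Real.hasDerivAt_negMulLog (ne_of_gt h0)
    have := ((((h1.add ((dk δ hδs).const_mul 2)).sub (dk α hαs)).sub (dk β hβs)).sub (dk γ hγs))
    exact this.congr_deriv (by ring)
  -- antitone
  have hanti : AntitoneOn Ψ (Set.Ici s) := by
    apply antitoneOn_of_deriv_nonpos (convex_Ici s) hcont.continuousOn
    · intro σ hσ
      rw [interior_Ici] at hσ
      exact (hds σ hσ).differentiableAt.differentiableWithinAt
    · intro σ hσ
      rw [interior_Ici] at hσ
      have hσ' : s < σ := hσ
      rw [(hds σ hσ').deriv]
      have h0 : (0:ℝ) < σ := lt_of_le_of_lt hs0 hσ'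
      have hA : (0:ℝ) < σ - α := by linarith
      have hB : (0:ℝ) < σ - β := by linarith
      have hC : (0:ℝ) < σ - γ := by linarith
      have hD : (0:ℝ) < σ - δ := by linarith
      have hlog : Real.log (σ - α) + Real.log (σ - β) + Real.log (σ - γ)
          ≤ Real.log σ + 2 * Real.log (σ - δ) := by
        have hL : Real.log (σ - α) + Real.log (σ - β) + Real.log (σ - γ)
            = Real.log ((σ - α) * (σ - β) * (σ - γ)) := by
          rw [Real.log_mul (by positivity) (ne_of_gt hC), Real.log_mul (ne_of_gt hA)
            (ne_of_gt hB)]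
        have hR : Real.log σ + 2 * Real.log (σ - δ) = Real.log (σ * (σ - δ) ^ 2) := by
          rw [Real.log_mul (ne_of_gt h0) (by positivity), Real.log_pow]
          push_cast; ring
        rw [hL, hR]
        exact Real.log_le_log (by positivity) (hprod σ)
      linarith
  -- limit 0 at infinity
  have hfun : Ψ = fun σ : ℝ =>
      2 * (Real.negMulLog (σ - δ) - Real.negMulLog σ - δ * Real.log σ)
      - (Real.negMulLog (σ - α) - Real.negMulLog σ - α * Real.log σ)
      - (Real.negMulLog (σ - β) - Real.negMulLog σ - β * Real.log σ)
      - (Real.negMulLog (σ - γ) - Real.negMulLog σ - γ * Real.log σ) := by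
    funext σ
    simp only [hΨ]
    linear_combination (-(Real.log σ)) * hsum
  have hlim : Tendsto Ψ atTop (nhds 0) := by
    rw [hfun]
    have := (((tendsto_negMulLog_aux δ).const_mul 2).sub (tendsto_negMulLog_aux α)).sub
      (tendsto_negMulLog_aux β) |>.sub (tendsto_negMulLog_aux γ)
    have h0 : 2 * δ - α - β - γ = 0 := by linarith
    rw [h0] at this
    exact this
  have : ∀ᶠ σ in atTop, Ψ σ ≤ Ψ s := by
    filter_upwards [eventually_ge_atTop s] with σ hσ
    exact hanti Set.self_mem_Ici hσ hσ
  exact le_of_tendsto hlim this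

/-- Main real inequality: for nonnegative `u v w`,
`H(u²+2vw, w²+2uv, v²+2uw) ≤ H(u²+v²+w², uv+vw+wu, uv+vw+wu)`. -/
lemma main_ineq (u v w : ℝ) (hu : 0 ≤ u) (hv : 0 ≤ v) (hw : 0 ≤ w) :
    Real.negMulLog (u ^ 2 + 2 * v * w) + Real.negMulLog (w ^ 2 + 2 * u * v)
      + Real.negMulLog (v ^ 2 + 2 * u * w)
    ≤ Real.negMulLog (u ^ 2 + v ^ 2 + w ^ 2)
      + 2 * Real.negMulLog (u * v + v * w + w * u) := by
  have h := psi_nonneg ((v - w) ^ 2) ((u - v) ^ 2) ((u - w) ^ 2)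
    (u ^ 2 + v ^ 2 + w ^ 2 - (u * v + v * w + w * u)) (u ^ 2 + v ^ 2 + w ^ 2)
    (by positivity)
    (by nlinarith [mul_nonneg hv hw])
    (by nlinarith [mul_nonneg hu hv])
    (by nlinarith [mul_nonneg hu hw])
    (by nlinarith [mul_nonneg hu hv, mul_nonneg hv hw, mul_nonneg hu hw])
    (by ring)
    (fun σ => by nlinarith [sq_nonneg ((u - v) * (v - w) * (u - w))])
  have e1 : u ^ 2 + v ^ 2 + w ^ 2 - (v - w) ^ 2 = u ^ 2 + 2 * v * w := by ring
  have e2 : u ^ 2 + v ^ 2 + w ^ 2 - (u - v) ^ 2 = w ^ 2 + 2 * u * v := by ring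
  have e3 : u ^ 2 + v ^ 2 + w ^ 2 - (u - w) ^ 2 = v ^ 2 + 2 * u * w := by ring
  have e4 : u ^ 2 + v ^ 2 + w ^ 2 - (u ^ 2 + v ^ 2 + w ^ 2 - (u * v + v * w + w * u))
      = u * v + v * w + w * u := by ring
  rw [e1, e2, e3, e4] at h
  exact h

/-- For i.i.d. random variables `X, Y` taking values in `ℤ/3ℤ`,
`H(X+Y) ≤ H(X-Y)`. -/
theorem entropy_add_le_entropy_sub_zmod3
    {Ω : Type*} [MeasurableSpace Ω] (P : Measure Ω) [IsProbabilityMeasure P]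
    (X Y : Ω → ZMod 3) (hX : Measurable X) (hY : Measurable Y)
    (hindep : IndepFun X Y P) (hid : IdentDistrib X Y P P) :
    shEnt P (fun ω => X ω + Y ω) ≤ shEnt P (fun ω => X ω - Y ω) := by
  set p : ZMod 3 → ℝ := fun i => (P (X ⁻¹' {i})).toReal with hp
  have hp0 : ∀ i, 0 ≤ p i := fun i => ENNReal.toReal_nonneg
  have hYX : ∀ j : ZMod 3, P (Y ⁻¹' {j}) = P (X ⁻¹' {j}) := by
    intro j
    rw [← Measure.map_apply hY (measurableSet_singleton j), ← hid.map_eq,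
      Measure.map_apply hX (measurableSet_singleton j)]
  -- generic computation for Z ω = X ω ∘ Y ω with preimage structure
  have key : ∀ (Z : Ω → ZMod 3) (g : ZMod 3 → ZMod 3 → ZMod 3),
      (∀ ω (i k : ZMod 3), X ω = i → (Z ω = k ↔ Y ω = g k i)) →
      ∀ k : ZMod 3, (P (Z ⁻¹' {k})).toReal = ∑ i : ZMod 3, p i * p (g k i) := by
    intro Z g hg k
    have hdecomp : Z ⁻¹' {k} = ⋃ i : ZMod 3, (X ⁻¹' {i} ∩ Y ⁻¹' {g k i}) := by
      ext ω
      simp only [Set.mem_preimage, Set.mem_singleton_iff, Set.mem_iUnion, Set.mem_inter_iff]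
      constructor
      · intro h
        exact ⟨X ω, rfl, (hg ω (X ω) k rfl).mp h⟩
      · rintro ⟨i, hXi, hYi⟩
        exact (hg ω i k hXi).mpr hYi
    have hdisj : Pairwise (Function.onFun Disjoint
        fun i : ZMod 3 => X ⁻¹' {i} ∩ Y ⁻¹' {g k i}) := by
      intro i j hij
      simp only [Function.onFun]
      apply Set.disjoint_left.mpr
      rintro ω ⟨hXi, -⟩ ⟨hXj, -⟩
      exact hij (hXi.symm.trans hXj)
    have hmeas : ∀ i : ZMod 3, MeasurableSet (X ⁻¹' {i} ∩ Y ⁻¹' {g k i}) := fun i =>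
      (hX (measurableSet_singleton i)).inter (hY (measurableSet_singleton _))
    rw [hdecomp, measure_iUnion hdisj hmeas, tsum_fintype]
    rw [ENNReal.toReal_sum (fun i _ => measure_ne_top P _)]
    apply Finset.sum_congr rfl
    intro i _
    rw [hindep.measure_inter_preimage_eq_mul {i} {g k i} (measurableSet_singleton i)
      (measurableSet_singleton (g k i)), hYX, ENNReal.toReal_mul]
  have hq : ∀ k : ZMod 3,
      (P ((fun ω => X ω + Y ω) ⁻¹' {k})).toReal = ∑ i : ZMod 3, p i * p (k - i) := by
    apply key (fun ω => X ω + Y ω) (fun k i => k - i)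
    intro ω i k hXi
    constructor
    · intro h; rw [← h, hXi]; ring
    · intro h; rw [hXi, h]; ring
  have hr : ∀ k : ZMod 3,
      (P ((fun ω => X ω - Y ω) ⁻¹' {k})).toReal = ∑ i : ZMod 3, p i * p (i - k) := by
    apply key (fun ω => X ω - Y ω) (fun k i => i - k)
    intro ω i k hXi
    constructor
    · intro h; rw [← h, hXi]; ring
    · intro h; rw [hXi, h]; ring
  have huniv : (Finset.univ : Finset (ZMod 3)) = {0, 1, 2} := by decide
  have hsum3 : ∀ f : ZMod 3 → ℝ, (∑ i : ZMod 3, f i) = f 0 + f 1 + f 2 := by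
    intro f
    rw [huniv]
    rw [Finset.sum_insert (by decide), Finset.sum_insert (by decide), Finset.sum_singleton]
    ring
  have hent : ∀ Z : Ω → ZMod 3, shEnt P Z =
      Real.negMulLog (P (Z ⁻¹' {0})).toReal + Real.negMulLog (P (Z ⁻¹' {1})).toReal
        + Real.negMulLog (P (Z ⁻¹' {2})).toReal := by
    intro Z
    have hz : shEnt P Z = ∑ s : ZMod 3, Real.negMulLog (P (Z ⁻¹' {s})).toReal :=
      tsum_fintype _
    rw [hz, hsum3]
  rw [hent, hent]
  rw [hq 0, hq 1, hq 2, hr 0, hr 1, hr 2]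
  rw [hsum3, hsum3, hsum3, hsum3, hsum3, hsum3]
  simp only [show ((0:ZMod 3)-0)=0 by decide, show ((0:ZMod 3)-1)=2 by decide,
    show ((0:ZMod 3)-2)=1 by decide, show ((1:ZMod 3)-0)=1 by decide,
    show ((1:ZMod 3)-1)=0 by decide, show ((1:ZMod 3)-2)=2 by decide,
    show ((2:ZMod 3)-0)=2 by decide, show ((2:ZMod 3)-1)=1 by decide,
    show ((2:ZMod 3)-2)=0 by decide]
  have h := main_ineq (p 0) (p 1) (p 2) (hp0 0) (hp0 1) (hp0 2)
  have e1 : p 0 * p 0 + p 1 * p 2 + p 2 * p 1 = (p 0) ^ 2 + 2 * (p 1) * (p 2) := by ring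
  have e2 : p 0 * p 1 + p 1 * p 0 + p 2 * p 2 = (p 2) ^ 2 + 2 * (p 0) * (p 1) := by ring
  have e3 : p 0 * p 2 + p 1 * p 1 + p 2 * p 0 = (p 1) ^ 2 + 2 * (p 0) * (p 2) := by ring
  have e4 : p 0 * p 0 + p 1 * p 1 + p 2 * p 2 = (p 0) ^ 2 + (p 1) ^ 2 + (p 2) ^ 2 := by ring
  have e5 : p 0 * p 2 + p 1 * p 0 + p 2 * p 1 = p 0 * p 1 + p 1 * p 2 + p 2 * p 0 := by ring
  rw [e1, e2, e3, e4, e5]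
  linarith [h]
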